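/- arXiv:0704.1537 — 2 statements merged into one kernel-verified Lean document; each statement's English description precedes it below -/
import Mathlib

section
/- For any $a > 0$ and any measurable function $h$ on $(0,\infty)$, if $N_a(h) < \infty$ then $L_a(h) < \infty$; more precisely $L_a(h) \le C_a (1 + N_a(h))$ for a constant $C_a$ depending only on $a$. -/
open MeasureTheory Set ENNReal

/-- The level set `E(k,m)` of `h` over the dyadic interval `(2^k, 2^{k+1}]`. -/
def levelSet (h : ℝ → ℂ) (k : ℤ) (m : ℕ) : Set ℝ :=
  if m = 1 then {r | r ∈ Ioc ((2:ℝ)^k) ((2:ℝ)^(k+1)) ∧ ‖h r‖ ≤ 2}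
  else {r | r ∈ Ioc ((2:ℝ)^k) ((2:ℝ)^(k+1)) ∧
        (2:ℝ)^(m-1) < ‖h r‖ ∧ ‖h r‖ ≤ (2:ℝ)^m}

/-- `d_m(h) = sup_k 2^{-k} |E(k,m)|`. -/
noncomputable def dm (h : ℝ → ℂ) (m : ℕ) : ℝ≥0∞ :=
  ⨆ k : ℤ, (2:ℝ≥0∞)^(-k) * volume (levelSet h k m)

/-- `N_a(h) = ∑_{m ≥ 1} m^a 2^m d_m(h)`. -/
noncomputable def Na (a : ℝ) (h : ℝ → ℂ) : ℝ≥0∞ :=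
  ∑' m : ℕ, ((m:ℝ≥0∞) + 1) ^ a * 2 ^ (m + 1) * dm h (m + 1)

/-- `L_a(h) = sup_j ∫_{2^j}^{2^{j+1}} |h(r)| (log(2+|h(r)|))^a dr/r`. -/
noncomputable def La (a : ℝ) (h : ℝ → ℂ) : ℝ≥0∞ :=
  ⨆ j : ℤ, ∫⁻ r in Ioc ((2:ℝ)^j) ((2:ℝ)^(j+1)),
    ENNReal.ofReal (‖h r‖ * (Real.log (2 + ‖h r‖)) ^ a / r)

/-- Every point of the dyadic interval lies in some level set. -/
lemma mem_iUnion_levelSet (h : ℝ → ℂ) (j : ℤ) :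
    Ioc ((2:ℝ)^j) ((2:ℝ)^(j+1)) ⊆ ⋃ m : ℕ, levelSet h j (m+1) := by
  intro r hr
  by_cases h2 : ‖h r‖ ≤ 2
  · refine mem_iUnion.2 ⟨0, ?_⟩
    unfold levelSet
    rw [if_pos rfl]
    exact ⟨hr, h2⟩
  push_neg at h2
  have hex : ∃ n : ℕ, ‖h r‖ ≤ 2 ^ n := by
    obtain ⟨n, hn⟩ := pow_unbounded_of_one_lt ‖h r‖ (one_lt_two (α := ℝ))
    exact ⟨n, hn.le⟩
  classical
  have hMle : ‖h r‖ ≤ 2 ^ Nat.find hex := Nat.find_spec hex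
  have hM2 : 2 ≤ Nat.find hex := by
    rcases Nat.lt_or_ge (Nat.find hex) 2 with hlt | hge
    · exfalso
      have h1 : ‖h r‖ ≤ 2 ^ 1 :=
        hMle.trans (pow_le_pow_right₀ one_le_two (by omega))
      rw [pow_one] at h1
      linarith
    · exact hge
  obtain ⟨k, hkM⟩ : ∃ k, Nat.find hex = k + 1 := ⟨Nat.find hex - 1, by omega⟩
  rw [hkM] at hMle
  refine mem_iUnion.2 ⟨k, ?_⟩
  have hk : ¬ ‖h r‖ ≤ 2 ^ k := Nat.find_min hex (by omega)
  push_neg at hk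
  unfold levelSet
  rw [if_neg (by omega)]
  refine ⟨hr, ?_, ?_⟩
  · simpa using hk
  · exact_mod_cast hMle

lemma levelSet_mem {h : ℝ → ℂ} {j : ℤ} {m : ℕ} {r : ℝ} (hr : r ∈ levelSet h j (m+1)) :
    r ∈ Ioc ((2:ℝ)^j) ((2:ℝ)^(j+1)) ∧ ‖h r‖ ≤ 2 ^ (m+1) := by
  unfold levelSet at hr
  rcases Nat.eq_zero_or_pos m with rfl | hm
  · rw [if_pos rfl] at hr
    refine ⟨hr.1, by simpa using hr.2⟩
  · rw [if_neg (by omega)] at hr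
    exact ⟨hr.1, hr.2.2⟩

lemma ofReal_two_zpow (j : ℤ) : ENNReal.ofReal ((2:ℝ)^j) = (2:ℝ≥0∞)^j := by
  rcases j with n | n
  · simp [ENNReal.ofReal_pow (by norm_num : (0:ℝ) ≤ 2)]
  · rw [zpow_negSucc, zpow_negSucc, ENNReal.ofReal_inv_of_pos (by positivity),
      ENNReal.ofReal_pow (by norm_num : (0:ℝ) ≤ 2)]
    norm_num

/-- If `N_a(h) < ∞` then `L_a(h) < ∞`; more precisely
`L_a(h) ≤ C_a (1 + N_a(h))` with `C_a` depending only on `a`. -/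
theorem stmt1 (a : ℝ) (ha : 0 < a) :
    ∃ C : ℝ≥0∞, 0 < C ∧ C < ∞ ∧ ∀ h : ℝ → ℂ, Measurable h →
      (La a h ≤ C * (1 + Na a h) ∧ (Na a h < ∞ → La a h < ∞)) := by
  refine ⟨ENNReal.ofReal (2 ^ a), ?_, ofReal_lt_top, ?_⟩
  · rw [ENNReal.ofReal_pos]
    positivity
  intro h hh
  have key : La a h ≤ ENNReal.ofReal (2 ^ a) * Na a h := by
    refine iSup_le fun j => ?_
    calc ∫⁻ r in Ioc ((2:ℝ)^j) ((2:ℝ)^(j+1)),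
          ENNReal.ofReal (‖h r‖ * (Real.log (2 + ‖h r‖)) ^ a / r)
        ≤ ∫⁻ r in ⋃ m : ℕ, levelSet h j (m+1),
          ENNReal.ofReal (‖h r‖ * (Real.log (2 + ‖h r‖)) ^ a / r) :=
          lintegral_mono_set (mem_iUnion_levelSet h j)
      _ ≤ ∑' m : ℕ, ∫⁻ r in levelSet h j (m+1),
          ENNReal.ofReal (‖h r‖ * (Real.log (2 + ‖h r‖)) ^ a / r) :=
          lintegral_iUnion_le _ _
      _ ≤ ∑' m : ℕ, ENNReal.ofReal (2 ^ a) *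
            (((m:ℝ≥0∞) + 1) ^ a * 2 ^ (m + 1) * dm h (m + 1)) := by
          refine ENNReal.tsum_le_tsum fun m => ?_
          have hpt : ∀ r ∈ levelSet h j (m+1),
              ENNReal.ofReal (‖h r‖ * (Real.log (2 + ‖h r‖)) ^ a / r)
              ≤ ENNReal.ofReal ((2 ^ a * ((m:ℝ)+1) ^ a * 2 ^ (m+1)) * ((2:ℝ)^j)⁻¹) := by
            intro r hr
            obtain ⟨hrI, hnorm⟩ := levelSet_mem hr
            apply ENNReal.ofReal_le_ofReal
            have ht0 : (0:ℝ) ≤ ‖h r‖ := norm_nonneg _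
            have hlog0 : 0 ≤ Real.log (2 + ‖h r‖) := Real.log_nonneg (by linarith)
            have hlog : Real.log (2 + ‖h r‖) ≤ (m:ℝ) + 2 := by
              have h1 : (2:ℝ) + ‖h r‖ ≤ 2 ^ (m+2) := by
                have : (2:ℝ) ≤ 2 ^ (m+1) := by
                  calc (2:ℝ) = 2^1 := (pow_one 2).symm
                  _ ≤ 2^(m+1) := pow_le_pow_right₀ (by norm_num) (by omega)
                have h2 : (2:ℝ)^(m+2) = 2^(m+1) + 2^(m+1) := by ring
                linarith
              calc Real.log (2 + ‖h r‖) ≤ Real.log (2 ^ (m+2)) :=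
                    Real.log_le_log (by linarith) h1
                _ = ((m:ℝ)+2) * Real.log 2 := by
                    rw [Real.log_pow]; push_cast; ring
                _ ≤ ((m:ℝ)+2) * 1 := by
                    have := Real.log_two_lt_d9
                    nlinarith [Nat.cast_nonneg (α := ℝ) m]
                _ = (m:ℝ)+2 := mul_one _
            have hrpow : (Real.log (2 + ‖h r‖)) ^ a ≤ 2 ^ a * ((m:ℝ)+1) ^ a := by
              calc (Real.log (2 + ‖h r‖)) ^ a ≤ ((m:ℝ)+2) ^ a :=
                    Real.rpow_le_rpow hlog0 hlog ha.le
                _ ≤ (2 * ((m:ℝ)+1)) ^ a :=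
                    Real.rpow_le_rpow (by positivity) (by linarith) ha.le
                _ = 2 ^ a * ((m:ℝ)+1) ^ a :=
                    Real.mul_rpow (by norm_num) (by positivity)
            have hnum : ‖h r‖ * (Real.log (2 + ‖h r‖)) ^ a
                ≤ 2 ^ (m+1) * (2 ^ a * ((m:ℝ)+1) ^ a) :=
              mul_le_mul hnorm hrpow (by positivity) (by positivity)
            have hdiv : ‖h r‖ * (Real.log (2 + ‖h r‖)) ^ a / r
                ≤ 2 ^ (m+1) * (2 ^ a * ((m:ℝ)+1) ^ a) / (2:ℝ)^j :=
              div_le_div₀ (by positivity) hnum (by positivity) hrI.1.le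
            calc ‖h r‖ * (Real.log (2 + ‖h r‖)) ^ a / r
                ≤ 2 ^ (m+1) * (2 ^ a * ((m:ℝ)+1) ^ a) / (2:ℝ)^j := hdiv
              _ = (2 ^ a * ((m:ℝ)+1) ^ a * 2 ^ (m+1)) * ((2:ℝ)^j)⁻¹ := by ring
          have hsplit : ENNReal.ofReal ((2 ^ a * ((m:ℝ)+1) ^ a * 2 ^ (m+1)) * ((2:ℝ)^j)⁻¹)
              = ENNReal.ofReal (2 ^ a) * (((m:ℝ≥0∞)+1) ^ a * 2 ^ (m+1) * (2:ℝ≥0∞)^(-j)) := by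
            have e1 : ENNReal.ofReal (((m:ℝ)+1)^a) = ((m:ℝ≥0∞)+1)^a := by
              rw [← ENNReal.ofReal_rpow_of_pos (by positivity : (0:ℝ) < (m:ℝ)+1)]
              congr 1
              rw [ENNReal.ofReal_add (by positivity) zero_le_one]
              simp
            have e2 : ENNReal.ofReal ((2:ℝ)^(m+1)) = (2:ℝ≥0∞)^(m+1) := by
              rw [ENNReal.ofReal_pow (by norm_num : (0:ℝ) ≤ 2)]
              norm_num
            have e3 : ENNReal.ofReal (((2:ℝ)^j)⁻¹) = (2:ℝ≥0∞)^(-j) := by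
              rw [ENNReal.ofReal_inv_of_pos (by positivity), ofReal_two_zpow,
                ← ENNReal.zpow_neg]
            rw [ENNReal.ofReal_mul (by positivity), ENNReal.ofReal_mul (by positivity),
              ENNReal.ofReal_mul (by positivity), e1, e2, e3]
            ring
          calc ∫⁻ r in levelSet h j (m+1),
                ENNReal.ofReal (‖h r‖ * (Real.log (2 + ‖h r‖)) ^ a / r)
              ≤ ∫⁻ _ in levelSet h j (m+1),
                ENNReal.ofReal ((2 ^ a * ((m:ℝ)+1) ^ a * 2 ^ (m+1)) * ((2:ℝ)^j)⁻¹) :=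
                setLIntegral_mono measurable_const hpt
            _ = ENNReal.ofReal ((2 ^ a * ((m:ℝ)+1) ^ a * 2 ^ (m+1)) * ((2:ℝ)^j)⁻¹)
                * volume (levelSet h j (m+1)) := setLIntegral_const _ _
            _ = ENNReal.ofReal (2 ^ a) * (((m:ℝ≥0∞)+1) ^ a * 2 ^ (m+1)
                * ((2:ℝ≥0∞)^(-j) * volume (levelSet h j (m+1)))) := by
                rw [hsplit]; ring
            _ ≤ ENNReal.ofReal (2 ^ a) *
                (((m:ℝ≥0∞) + 1) ^ a * 2 ^ (m + 1) * dm h (m + 1)) := by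
                gcongr
                exact le_iSup (fun k : ℤ => (2:ℝ≥0∞)^(-k) * volume (levelSet h k (m+1))) j
      _ = ENNReal.ofReal (2 ^ a) * Na a h := by
          rw [ENNReal.tsum_mul_left]; rfl
  have hC : ENNReal.ofReal (2 ^ a) * Na a h
      ≤ ENNReal.ofReal (2 ^ a) * (1 + Na a h) := by
    gcongr
    exact le_add_self
  refine ⟨key.trans hC, fun hNa => ?_⟩
  exact lt_of_le_of_lt (key.trans hC)
    (ENNReal.mul_lt_top ofReal_lt_top (ENNReal.add_lt_top.2 ⟨ENNReal.one_lt_top, hNa⟩))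
end

section
/- For any $a > 0$ and $b > 1$, if $L_{a+b}(h) < \infty$ for a measurable function $h$ on $(0,\infty)$, then $N_a(h) < \infty$; in fact $N_a(h) \le 2 d_1(h) + C L_{a+b}(h) \sum_{m \ge 2} m^{-b}$ for an absolute constant $C$. -/
open MeasureTheory Set ENNReal

lemma measurableSet_levelSet (h : ℝ → ℂ) (hm : Measurable h) (k : ℤ) (m : ℕ) :
    MeasurableSet (levelSet h k m) := by
  unfold levelSet
  split
  · exact measurableSet_Ioc.inter (measurableSet_le hm.norm measurable_const)
  · exact measurableSet_Ioc.inter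
      ((measurableSet_lt measurable_const hm.norm).inter
        (measurableSet_le hm.norm measurable_const))

lemma dm_bound (a' : ℝ) (ha' : 0 ≤ a') (h : ℝ → ℂ) (hm : Measurable h) (m : ℕ) :
    ENNReal.ofReal ((2:ℝ)^(m+1) * (((m:ℝ)+1) * Real.log 2)^a') * dm h (m+2) ≤
      2 * La a' h := by
  set c : ℝ := (2:ℝ)^(m+1) * (((m:ℝ)+1) * Real.log 2)^a' with hc
  have hc0 : 0 ≤ c := by positivity
  rw [dm, ENNReal.mul_iSup]
  refine iSup_le fun k => ?_
  set E := levelSet h k (m+2) with hE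
  have hne : m + 2 ≠ 1 := by omega
  have hEsub : E ⊆ Ioc ((2:ℝ)^k) ((2:ℝ)^(k+1)) := by
    intro r hr
    rw [hE, levelSet, if_neg hne] at hr
    exact hr.1
  have hpt : ∀ r ∈ E, ENNReal.ofReal (c / (2:ℝ)^(k+1)) ≤
      ENNReal.ofReal (‖h r‖ * (Real.log (2 + ‖h r‖)) ^ a' / r) := by
    intro r hr
    rw [hE, levelSet, if_neg hne] at hr
    obtain ⟨⟨hr1, hr2⟩, hlow, _⟩ := hr
    have hrpos : (0:ℝ) < r := lt_trans (by positivity) hr1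
    apply ENNReal.ofReal_le_ofReal
    have hnorm : (2:ℝ)^(m+1) ≤ ‖h r‖ := le_of_lt hlow
    have hlog : ((m:ℝ)+1) * Real.log 2 ≤ Real.log (2 + ‖h r‖) := by
      have h1 : (2:ℝ)^(m+1) ≤ 2 + ‖h r‖ := by
        have := norm_nonneg (h r); linarith [hnorm]
      calc ((m:ℝ)+1) * Real.log 2 = Real.log ((2:ℝ)^(m+1)) := by
            rw [Real.log_pow]; push_cast; ring
        _ ≤ Real.log (2 + ‖h r‖) := Real.log_le_log (by positivity) h1
    have hlogpow : (((m:ℝ)+1) * Real.log 2)^a' ≤ (Real.log (2 + ‖h r‖))^a' :=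
      Real.rpow_le_rpow (by positivity) hlog ha'
    have hnum : c ≤ ‖h r‖ * (Real.log (2 + ‖h r‖))^a' :=
      mul_le_mul hnorm hlogpow (by positivity) (norm_nonneg _)
    exact div_le_div₀ (le_trans hc0 hnum) hnum hrpos hr2
  have key : ENNReal.ofReal (c / (2:ℝ)^(k+1)) * volume E ≤ La a' h := by
    calc ENNReal.ofReal (c / (2:ℝ)^(k+1)) * volume E
        = ∫⁻ _ in E, ENNReal.ofReal (c / (2:ℝ)^(k+1)) := (setLIntegral_const _ _).symm
      _ ≤ ∫⁻ r in E, ENNReal.ofReal (‖h r‖ * (Real.log (2 + ‖h r‖)) ^ a' / r) :=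
          setLIntegral_mono' (measurableSet_levelSet h hm k (m+2)) hpt
      _ ≤ ∫⁻ r in Ioc ((2:ℝ)^k) ((2:ℝ)^(k+1)),
            ENNReal.ofReal (‖h r‖ * (Real.log (2 + ‖h r‖)) ^ a' / r) :=
          lintegral_mono_set hEsub
      _ ≤ La a' h := by
          rw [La]
          exact le_iSup (fun j : ℤ => ∫⁻ r in Ioc ((2:ℝ)^j) ((2:ℝ)^(j+1)),
            ENNReal.ofReal (‖h r‖ * (Real.log (2 + ‖h r‖)) ^ a' / r)) k
  have hsplit : ENNReal.ofReal (c / (2:ℝ)^(k+1)) =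
      ENNReal.ofReal c * (2:ℝ≥0∞)^(-(k+1)) := by
    rw [div_eq_mul_inv, ENNReal.ofReal_mul hc0,
      ENNReal.ofReal_inv_of_pos (by positivity), ofReal_two_zpow,
      ENNReal.zpow_neg]
  have hzp : (2:ℝ≥0∞)^(-k) = 2 * (2:ℝ≥0∞)^(-(k+1)) := by
    have : -k = 1 + -(k+1) := by ring
    rw [this, ENNReal.zpow_add two_ne_zero ENNReal.ofNat_ne_top, zpow_one]
  calc ENNReal.ofReal c * ((2:ℝ≥0∞)^(-k) * volume E)
      = 2 * (ENNReal.ofReal (c / (2:ℝ)^(k+1)) * volume E) := by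
        rw [hsplit, hzp]; ring
    _ ≤ 2 * La a' h := by exact mul_le_mul_right key 2

lemma real_scalar (a b : ℝ) (ha : 0 < a) (hb : 1 < b) (m : ℕ) :
    ((m:ℝ)+2)^a * 2^(m+2) * 2 ≤
      (4 * (2 / Real.log 2)^(a+b)) * ((m:ℝ)+2)^(-b) *
        ((2:ℝ)^(m+1) * (((m:ℝ)+1) * Real.log 2)^(a+b)) := by
  have hlog2 : 0 < Real.log 2 := Real.log_pos (by norm_num)
  have hm2 : (0:ℝ) < (m:ℝ)+2 := by positivity
  have hab : 0 ≤ a + b := by linarith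
  have hkey : ((m:ℝ)+2)^a ≤ ((m:ℝ)+2)^(-b) * (2*((m:ℝ)+1))^(a+b) := by
    have h1 : ((m:ℝ)+2)^(a+b) ≤ (2*((m:ℝ)+1))^(a+b) :=
      Real.rpow_le_rpow hm2.le (by push_cast; linarith) hab
    calc ((m:ℝ)+2)^a = ((m:ℝ)+2)^(-b) * ((m:ℝ)+2)^(a+b) := by
          rw [← Real.rpow_add hm2]; ring_nf
      _ ≤ ((m:ℝ)+2)^(-b) * (2*((m:ℝ)+1))^(a+b) := by
          exact mul_le_mul_of_nonneg_left h1 (by positivity)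
  have hmul : (2 / Real.log 2)^(a+b) * (((m:ℝ)+1) * Real.log 2)^(a+b) =
      (2*((m:ℝ)+1))^(a+b) := by
    rw [← Real.mul_rpow (by positivity) (by positivity)]
    congr 1
    field_simp
  have h2 : ((m:ℝ)+2)^a * 2^(m+2) * 2 = 8 * 2^m * ((m:ℝ)+2)^a := by ring
  have h3 : (4 * (2 / Real.log 2)^(a+b)) * ((m:ℝ)+2)^(-b) *
        ((2:ℝ)^(m+1) * (((m:ℝ)+1) * Real.log 2)^(a+b)) =
      8 * 2^m * (((m:ℝ)+2)^(-b) * (2*((m:ℝ)+1))^(a+b)) := by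
    rw [← hmul]; ring
  rw [h2, h3]
  exact mul_le_mul_of_nonneg_left hkey (by positivity)

lemma term_bound (a b : ℝ) (ha : 0 < a) (hb : 1 < b) (h : ℝ → ℂ)
    (hm : Measurable h) (m : ℕ) :
    ((m:ℝ≥0∞)+2)^a * 2^(m+2) * dm h (m+2) ≤
      ENNReal.ofReal (4 * (2 / Real.log 2)^(a+b)) * La (a+b) h *
        ((m:ℝ≥0∞)+2)^(-b) := by
  have hlog2 : 0 < Real.log 2 := Real.log_pos (by norm_num)
  set c : ℝ := (2:ℝ)^(m+1) * (((m:ℝ)+1) * Real.log 2)^(a+b) with hc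
  have hcpos : 0 < c := by positivity
  have hc0 : ENNReal.ofReal c ≠ 0 := by
    simp [ENNReal.ofReal_eq_zero, not_le, hcpos]
  have hdm : dm h (m+2) ≤ 2 * La (a+b) h / ENNReal.ofReal c := by
    rw [ENNReal.le_div_iff_mul_le (Or.inl hc0) (Or.inl ENNReal.ofReal_ne_top),
      mul_comm]
    exact dm_bound (a+b) (by linarith) h hm m
  calc ((m:ℝ≥0∞)+2)^a * 2^(m+2) * dm h (m+2)
      ≤ ((m:ℝ≥0∞)+2)^a * 2^(m+2) * (2 * La (a+b) h / ENNReal.ofReal c) := by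
        exact mul_le_mul_right hdm _
    _ = (((m:ℝ≥0∞)+2)^a * 2^(m+2) * 2 / ENNReal.ofReal c) * La (a+b) h := by
        simp only [div_eq_mul_inv]; ring
    _ ≤ (ENNReal.ofReal (4 * (2 / Real.log 2)^(a+b)) * ((m:ℝ≥0∞)+2)^(-b)) *
          La (a+b) h := by
        refine mul_le_mul_left ?_ _
        rw [ENNReal.div_le_iff_le_mul (Or.inl hc0) (Or.inl ENNReal.ofReal_ne_top)]
        have hcast : ((m:ℝ≥0∞)+2) = ENNReal.ofReal ((m:ℝ)+2) := by
          rw [ENNReal.ofReal_add (by positivity) (by norm_num)]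
          simp [ENNReal.ofReal_natCast]
        have hm2 : (0:ℝ) < (m:ℝ)+2 := by positivity
        rw [hcast, ENNReal.ofReal_rpow_of_pos hm2, ENNReal.ofReal_rpow_of_pos hm2]
        calc ENNReal.ofReal (((m:ℝ)+2)^a) * 2^(m+2) * 2
            = ENNReal.ofReal (((m:ℝ)+2)^a * 2^(m+2) * 2) := by
              rw [ENNReal.ofReal_mul (by positivity), ENNReal.ofReal_mul (by positivity)]
              norm_num [ENNReal.ofReal_pow]
          _ ≤ ENNReal.ofReal ((4 * (2 / Real.log 2)^(a+b)) * ((m:ℝ)+2)^(-b) * c) :=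
              ENNReal.ofReal_le_ofReal (real_scalar a b ha hb m)
          _ = ENNReal.ofReal (4 * (2 / Real.log 2)^(a+b)) *
                ENNReal.ofReal (((m:ℝ)+2)^(-b)) * ENNReal.ofReal c := by
              rw [ENNReal.ofReal_mul (by positivity), ENNReal.ofReal_mul (by positivity)]
    _ = ENNReal.ofReal (4 * (2 / Real.log 2)^(a+b)) * La (a+b) h *
          ((m:ℝ≥0∞)+2)^(-b) := by ring

lemma dm_one_le (h : ℝ → ℂ) : dm h 1 ≤ 1 := by
  rw [dm]
  refine iSup_le fun k => ?_
  have hsub : levelSet h k 1 ⊆ Ioc ((2:ℝ)^k) ((2:ℝ)^(k+1)) := by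
    intro r hr; rw [levelSet, if_pos rfl] at hr; exact hr.1
  have hvol : volume (Ioc ((2:ℝ)^k) ((2:ℝ)^(k+1))) = (2:ℝ≥0∞)^k := by
    rw [Real.volume_Ioc, ← ofReal_two_zpow]
    congr 1
    rw [zpow_add₀ (by norm_num : (2:ℝ) ≠ 0) k 1]
    ring
  calc (2:ℝ≥0∞)^(-k) * volume (levelSet h k 1)
      ≤ (2:ℝ≥0∞)^(-k) * (2:ℝ≥0∞)^k := by
        exact mul_le_mul_right (hvol ▸ measure_mono hsub) _
    _ = 1 := by
        rw [← ENNReal.zpow_add two_ne_zero ENNReal.ofNat_ne_top]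
        simp

lemma tsum_finite (b : ℝ) (hb : 1 < b) :
    (∑' m : ℕ, ((m:ℝ≥0∞) + 2) ^ (-b)) < ∞ := by
  have hsum : Summable (fun m : ℕ => ((m:ℝ)+2)^(-b)) := by
    have h1 : Summable (fun n : ℕ => (n:ℝ)^(-b)) :=
      Real.summable_nat_rpow.mpr (by linarith)
    have h2 : (fun m : ℕ => ((m:ℝ)+2)^(-b)) =
        (fun n : ℕ => (n:ℝ)^(-b)) ∘ (fun m => m + 2) := by
      funext m
      simp only [Function.comp_apply]
      push_cast
      ring_nf
    rw [h2]
    exact h1.comp_injective (add_left_injective 2)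
  have heq : ∀ m : ℕ, ((m:ℝ≥0∞) + 2) ^ (-b) = ENNReal.ofReal (((m:ℝ)+2)^(-b)) := by
    intro m
    have hcast : ((m:ℝ≥0∞)+2) = ENNReal.ofReal ((m:ℝ)+2) := by
      rw [ENNReal.ofReal_add (by positivity) (by norm_num)]
      simp [ENNReal.ofReal_natCast]
    rw [hcast, ENNReal.ofReal_rpow_of_pos (by positivity)]
  calc (∑' m : ℕ, ((m:ℝ≥0∞) + 2) ^ (-b))
      = ∑' m : ℕ, ENNReal.ofReal (((m:ℝ)+2)^(-b)) := by
        exact tsum_congr heq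
    _ = ENNReal.ofReal (∑' m : ℕ, ((m:ℝ)+2)^(-b)) := by
        rw [ENNReal.ofReal_tsum_of_nonneg (fun m => by positivity) hsum]
    _ < ∞ := ENNReal.ofReal_lt_top

set_option maxHeartbeats 1000000 in
/-- If `L_{a+b}(h) < ∞` for some `b > 1`, then `N_a(h) < ∞`; in fact
`N_a(h) ≤ 2 d_1(h) + C L_{a+b}(h) ∑_{m ≥ 2} m^{-b}`. -/
theorem stmt2 (a b : ℝ) (ha : 0 < a) (hb : 1 < b) :
    ∃ C : ℝ≥0∞, 0 < C ∧ C < ∞ ∧ ∀ h : ℝ → ℂ, Measurable h →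
      (Na a h ≤ 2 * dm h 1 +
          C * La (a + b) h * ∑' m : ℕ, ((m:ℝ≥0∞) + 2) ^ (-b) ∧
        (La (a + b) h < ∞ → Na a h < ∞)) := by
  have hlog2 : 0 < Real.log 2 := Real.log_pos (by norm_num)
  set C := ENNReal.ofReal (4 * (2 / Real.log 2)^(a+b)) with hC
  have hCpos : 0 < C := by
    rw [hC, ENNReal.ofReal_pos]
    have : (0:ℝ) < (2 / Real.log 2)^(a+b) :=
      Real.rpow_pos_of_pos (by positivity) _
    linarith
  refine ⟨C, hCpos, ENNReal.ofReal_lt_top, fun h hm => ?_⟩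
  have hmain : Na a h ≤ 2 * dm h 1 +
      C * La (a + b) h * ∑' m : ℕ, ((m:ℝ≥0∞) + 2) ^ (-b) := by
    rw [Na, tsum_eq_zero_add' ENNReal.summable]
    refine add_le_add ?_ ?_
    · simp
    · calc (∑' m : ℕ, (((m+1:ℕ):ℝ≥0∞) + 1) ^ a * 2 ^ (m+1+1) * dm h (m+1+1))
          ≤ ∑' m : ℕ, C * La (a + b) h * ((m:ℝ≥0∞) + 2) ^ (-b) := by
            refine ENNReal.tsum_le_tsum fun m => ?_
            have hcast : (((m+1:ℕ):ℝ≥0∞) + 1) = ((m:ℝ≥0∞) + 2) := by push_cast; ring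
            rw [hcast]
            exact term_bound a b ha hb h hm m
        _ = C * La (a + b) h * ∑' m : ℕ, ((m:ℝ≥0∞) + 2) ^ (-b) :=
            ENNReal.tsum_mul_left
  refine ⟨hmain, fun hLa => ?_⟩
  refine lt_of_le_of_lt hmain ?_
  have h1 : 2 * dm h 1 < ∞ :=
    lt_of_le_of_lt (mul_le_mul_right (dm_one_le h) 2) (by norm_num)
  have h2 : C * La (a + b) h * (∑' m : ℕ, ((m:ℝ≥0∞) + 2) ^ (-b)) < ∞ :=
    ENNReal.mul_lt_top (ENNReal.mul_lt_top ENNReal.ofReal_lt_top hLa)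
      (tsum_finite b hb)
  exact ENNReal.add_lt_top.mpr ⟨h1, h2⟩
end
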